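/- For every natural number n, (1/4)_n · (1/2)_n · (3/4)_n = (4n)! / (4^{4n} · n!), where (a)_n denotes the Pochhammer symbol (rising factorial). -/

import Mathlib

theorem pochhammer_quarter_half_three_quarter (n : ℕ) :
    (ascPochhammer ℝ n).eval (1/4) * (ascPochhammer ℝ n).eval (1/2) *
      (ascPochhammer ℝ n).eval (3/4) =
    (Nat.factorial (4*n) : ℝ) / (4^(4*n) * (Nat.factorial n : ℝ)) := by
  induction n with
  | zero => simp
  | succ n ih =>
    have h4 : 4 * (n + 1) = 4 * n + 1 + 1 + 1 + 1 := by ring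
    rw [ascPochhammer_succ_eval, ascPochhammer_succ_eval, ascPochhammer_succ_eval, h4,
      Nat.factorial_succ, Nat.factorial_succ, Nat.factorial_succ, Nat.factorial_succ,
      Nat.factorial_succ]
    have hfn : (Nat.factorial n : ℝ) ≠ 0 := by positivity
    have hp : (4:ℝ)^(4*n) ≠ 0 := by positivity
    have := ih
    field_simp at this ⊢
    push_cast at this ⊢
    linear_combination ((1 + (n:ℝ)*4) * (1 + (n:ℝ)*2) * (3 + (n:ℝ)*4) * 256 * ((n:ℝ)+1)) * this
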